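/- For every subspace L ⊆ ℝ^n with dim(L) = 2, there exists a rational subspace K ⊆ ℝ^n with dim(K) = 2 and sign(K) = sign(L). -/

import Mathlib

open Matrix

noncomputable section

def signVec {n : ℕ} (x : Fin n → ℝ) : Fin n → SignType := fun i => SignType.sign (x i)

def signSet {n : ℕ} (L : Submodule ℝ (Fin n → ℝ)) : Set (Fin n → SignType) :=
  signVec '' (L : Set (Fin n → ℝ))

def IsRationalVec {n : ℕ} (v : Fin n → ℝ) : Prop := ∀ i, ∃ q : ℚ, v i = (q : ℝ)

def IsRationalSubspace {n : ℕ} (K : Submodule ℝ (Fin n → ℝ)) : Prop :=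
  ∃ s : Set (Fin n → ℝ), (∀ v ∈ s, IsRationalVec v) ∧ Submodule.span ℝ s = K

def IsRationalMatrix {m n : ℕ} (B : Matrix (Fin m) (Fin n) ℝ) : Prop :=
  ∀ i j, ∃ q : ℚ, B i j = (q : ℝ)

def mr {m n : ℕ} (A : Matrix (Fin m) (Fin n) SignType) : ℕ :=
  sInf {r | ∃ B : Matrix (Fin m) (Fin n) ℝ, (∀ i j, SignType.sign (B i j) = A i j) ∧ B.rank = r}

def SignPerp {n : ℕ} (c x : Fin n → SignType) : Prop :=
  (∀ i, c i = 0 ∨ x i = 0) ∨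
  (∃ i j, c i = x i ∧ c i ≠ 0 ∧ c j = -(x j) ∧ c j ≠ 0)
def dot2 (u v : ℝ × ℝ) : ℝ := u.1 * v.1 + u.2 * v.2
def det2 (u v : ℝ × ℝ) : ℝ := u.1 * v.2 - u.2 * v.1
def rot2 (u : ℝ × ℝ) : ℝ × ℝ := (-u.2, u.1)

lemma sgn_eq_iff {x y : ℝ} :
    SignType.sign x = SignType.sign y ↔ ((0 < x ↔ 0 < y) ∧ (x < 0 ↔ y < 0)) := by
  constructor
  · intro h
    constructor
    · constructor
      · intro hx; rw [sign_pos hx] at h; exact sign_eq_one_iff.mp h.symm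
      · intro hy; rw [sign_pos hy] at h; exact sign_eq_one_iff.mp h
    · constructor
      · intro hx; rw [sign_neg hx] at h; exact sign_eq_neg_one_iff.mp h.symm
      · intro hy; rw [sign_neg hy] at h; exact sign_eq_neg_one_iff.mp h
  · rintro ⟨h1, h2⟩
    rcases lt_trichotomy x 0 with h | h | h
    · rw [sign_neg h, sign_neg (h2.mp h)]
    · have hy : y = 0 := by
        rcases lt_trichotomy y 0 with h' | h' | h'
        · exact absurd (h2.mpr h') (by simp [h])
        · exact h'
        · exact absurd (h1.mpr h') (by simp [h])
      rw [h, hy]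
    · rw [sign_pos h, sign_pos (h1.mp h)]

lemma sgn_zero_iff {x y : ℝ} (h : SignType.sign x = SignType.sign y) : x = 0 ↔ y = 0 := by
  constructor
  · intro hx; rw [hx, sign_zero] at h; exact sign_eq_zero_iff.mp h.symm
  · intro hy; rw [hy, sign_zero] at h; exact sign_eq_zero_iff.mp h

lemma sgn_nonneg {x y : ℝ} (h : SignType.sign x = SignType.sign y) (hx : 0 ≤ x) : 0 ≤ y := by
  by_contra hy
  push_neg at hy
  exact absurd ((sgn_eq_iff.mp h).2.mpr hy) (not_lt.mpr hx)

lemma ne_zero2 {u : ℝ × ℝ} (h : u ≠ 0) : u.1 ≠ 0 ∨ u.2 ≠ 0 := by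
  by_contra h'
  push_neg at h'
  exact h (Prod.ext h'.1 h'.2)

lemma parallel2 {u x : ℝ × ℝ} (hu : u ≠ 0) (h : det2 u x = 0) : ∃ c : ℝ, x = c • u := by
  unfold det2 at h
  by_cases h1 : u.1 ≠ 0
  · refine ⟨x.1 / u.1, Prod.ext ?_ ?_⟩ <;> simp [smul_eq_mul]
    · field_simp
    · field_simp; nlinarith [h]
  · push_neg at h1
    have h2 : u.2 ≠ 0 := by rcases ne_zero2 hu with h' | h' <;> simp_all
    refine ⟨x.2 / u.2, Prod.ext ?_ ?_⟩ <;> simp [smul_eq_mul]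
    · field_simp; nlinarith [h]
    · field_simp

lemma dot2_pos_self {u : ℝ × ℝ} (hu : u ≠ 0) : 0 < dot2 u u := by
  unfold dot2
  rcases ne_zero2 hu with h | h
  · nlinarith [mul_self_pos.mpr h, mul_self_nonneg u.2]
  · nlinarith [mul_self_pos.mpr h, mul_self_nonneg u.1]

lemma smul_ne_zero2 {c : ℝ} {u : ℝ × ℝ} (hc : c ≠ 0) (hu : u ≠ 0) : c • u ≠ 0 :=
  smul_ne_zero hc hu

lemma hp_lemma {n : ℕ} (S : Finset (Fin n)) (hS : S.Nonempty) (v v' : Fin n → ℝ × ℝ)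
    (z : ℝ × ℝ)
    (hz : ∀ i ∈ S, 0 < dot2 (v i) z)
    (hne' : ∀ i ∈ S, v' i ≠ 0)
    (hdet : ∀ i ∈ S, ∀ j ∈ S,
      SignType.sign (det2 (v i) (v j)) = SignType.sign (det2 (v' i) (v' j)))
    (hdot : ∀ i ∈ S, ∀ j ∈ S, det2 (v i) (v j) = 0 →
      SignType.sign (dot2 (v i) (v j)) = SignType.sign (dot2 (v' i) (v' j))) :
    ∃ y : ℝ × ℝ, ∀ i ∈ S, 0 < dot2 (v' i) y := by
  classical
  set a : Fin n → ℝ := fun i => dot2 (v i) z with ha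
  set b : Fin n → ℝ := fun i => det2 z (v i) with hb
  set N : ℝ := dot2 z z with hN
  set t : Fin n → ℝ := fun i => b i / a i with ht
  have key1 : ∀ i j, a i * b j - b i * a j = N * det2 (v i) (v j) := by
    intro i j; simp only [ha, hb, hN, dot2, det2]; ring
  have key2 : ∀ i j, a i * a j + b i * b j = N * dot2 (v i) (v j) := by
    intro i j; simp only [ha, hb, hN, dot2, det2]; ring
  have hbt : ∀ i ∈ S, b i = t i * a i := by
    intro i hi
    have : a i ≠ 0 := ne_of_gt (hz i hi)
    show b i = b i / a i * a i; rw [div_mul_cancel₀ _ this]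
  have hNpos : 0 < N := by
    obtain ⟨i0, hi0⟩ := hS
    have h1 : 0 < a i0 := hz i0 hi0
    by_contra h
    push_neg at h
    have hz1 : z.1 = 0 := by
      simp only [hN, dot2] at h; nlinarith [mul_self_nonneg z.1, mul_self_nonneg z.2]
    have hz2 : z.2 = 0 := by
      simp only [hN, dot2] at h; nlinarith [mul_self_nonneg z.1, mul_self_nonneg z.2]
    simp only [ha, dot2, hz1, hz2] at h1
    linarith
  obtain ⟨imin, hminS, hmin⟩ := S.exists_min_image t hS
  obtain ⟨imax, hmaxS, hmax⟩ := S.exists_max_image t hS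
  -- original nonnegativity facts
  have hdmin : ∀ j ∈ S, 0 ≤ det2 (v imin) (v j) := by
    intro j hj
    have h1 : a imin * b j - b imin * a j = a imin * a j * (t j - t imin) := by
      rw [hbt j hj, hbt imin hminS]; ring
    have h2 : 0 ≤ a imin * a j * (t j - t imin) :=
      mul_nonneg (mul_pos (hz imin hminS) (hz j hj)).le (sub_nonneg.mpr (hmin j hj))
    nlinarith [key1 imin j, hNpos]
  have hdmax : ∀ j ∈ S, 0 ≤ det2 (v j) (v imax) := by
    intro j hj
    have h1 : a j * b imax - b j * a imax = a j * a imax * (t imax - t j) := by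
      rw [hbt j hj, hbt imax hmaxS]; ring
    have h2 : 0 ≤ a j * a imax * (t imax - t j) :=
      mul_nonneg (mul_pos (hz j hj) (hz imax hmaxS)).le (sub_nonneg.mpr (hmax j hj))
    nlinarith [key1 j imax, hNpos]
  have hpar : ∀ j ∈ S, det2 (v imin) (v j) = 0 → 0 < dot2 (v imin) (v j) := by
    intro j hj h0
    have h1 : a imin * b j - b imin * a j = 0 := by rw [key1, h0]; ring
    have h2 : a imin * a j * (t j - t imin) = 0 := by
      rw [hbt j hj, hbt imin hminS] at h1; linear_combination h1
    have haj : 0 < a imin * a j := mul_pos (hz imin hminS) (hz j hj)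
    have ht0 : t j = t imin := by
      rcases mul_eq_zero.mp h2 with h' | h'
      · exact absurd h' (ne_of_gt haj)
      · linarith
    have h3 : a imin * a j + b imin * b j = a imin * a j * (1 + t imin * t j) := by
      rw [hbt j hj, hbt imin hminS]; ring
    have h4 : 0 < a imin * a j * (1 + t imin * t j) := by
      rw [ht0]; nlinarith [mul_self_nonneg (t imin)]
    nlinarith [key2 imin j, hNpos]
  -- transfer to v'
  have hdmin' : ∀ j ∈ S, 0 ≤ det2 (v' imin) (v' j) := fun j hj =>
    sgn_nonneg (hdet imin hminS j hj) (hdmin j hj)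
  have hdmax' : ∀ j ∈ S, 0 ≤ det2 (v' j) (v' imax) := fun j hj =>
    sgn_nonneg (hdet j hj imax hmaxS) (hdmax j hj)
  rcases (hdmin' imax hmaxS).eq_or_lt with hD | hD
  · -- degenerate case: det2 (v' imin) (v' imax) = 0
    have hD0 : det2 (v imin) (v imax) = 0 :=
      (sgn_zero_iff (hdet imin hminS imax hmaxS)).mpr hD.symm
    have hdotmm : 0 < dot2 (v' imin) (v' imax) := by
      have h1 := hpar imax hmaxS hD0
      exact (sgn_eq_iff.mp (hdot imin hminS imax hmaxS hD0)).1.mp h1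
    obtain ⟨c, hc⟩ := parallel2 (hne' imin hminS) hD.symm
    have hcpos : 0 < c := by
      have h1 : dot2 (v' imin) (v' imax) = c * dot2 (v' imin) (v' imin) := by
        rw [hc]; simp [dot2, smul_eq_mul]; ring
      nlinarith [dot2_pos_self (hne' imin hminS)]
    refine ⟨v' imin, ?_⟩
    intro j hj
    have hj1 : det2 (v' imin) (v' j) = 0 := by
      have h1 : det2 (v' j) (v' imax) = -c * det2 (v' imin) (v' j) := by
        rw [hc]; simp [det2, smul_eq_mul]; ring
      have := hdmax' j hj
      have := hdmin' j hj
      nlinarith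
    obtain ⟨d, hd⟩ := parallel2 (hne' imin hminS) hj1
    have hdj0 : det2 (v imin) (v j) = 0 :=
      (sgn_zero_iff (hdet imin hminS j hj)).mpr hj1
    have hdpos : 0 < dot2 (v' imin) (v' j) :=
      (sgn_eq_iff.mp (hdot imin hminS j hj hdj0)).1.mp (hpar j hj hdj0)
    have hd2 : dot2 (v' imin) (v' j) = d * dot2 (v' imin) (v' imin) := by
      rw [hd]; simp [dot2, smul_eq_mul]; ring
    have hdpos' : 0 < d := by nlinarith [dot2_pos_self (hne' imin hminS)]
    have : dot2 (v' j) (v' imin) = d * dot2 (v' imin) (v' imin) := by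
      rw [hd]; simp [dot2, smul_eq_mul]; ring
    rw [this]
    nlinarith [dot2_pos_self (hne' imin hminS)]
  · -- generic case: D > 0
    set w1 := v' imin with hw1
    set w2 := v' imax with hw2
    set D : ℝ := det2 w1 w2 with hDdef
    refine ⟨((w2.2 - w1.2) / D, (w1.1 - w2.1) / D), ?_⟩
    intro j hj
    have hkey : ∀ u : ℝ × ℝ, D * dot2 u ((w2.2 - w1.2) / D, (w1.1 - w2.1) / D)
        = det2 u w2 + det2 w1 u := by
      intro u
      have hDne : D ≠ 0 := ne_of_gt hD
      have hDD : D * D⁻¹ = 1 := mul_inv_cancel₀ hDne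
      simp only [dot2, det2, div_eq_mul_inv]
      linear_combination (u.1 * (w2.2 - w1.2) + u.2 * (w1.1 - w2.1)) * hDD
    have hnum : 0 < det2 (v' j) w2 + det2 w1 (v' j) := by
      rcases (hdmax' j hj).eq_or_lt with h1 | h1
      · rcases (hdmin' j hj).eq_or_lt with h2 | h2
        · exfalso
          have hj0 : det2 (v' j) w1 = 0 := by
            have : det2 w1 (v' j) = - det2 (v' j) w1 := by simp [det2]; ring
            rw [this] at h2; linarith
          obtain ⟨c1, hc1⟩ := parallel2 (hne' j hj) hj0
          obtain ⟨c2, hc2⟩ := parallel2 (hne' j hj) h1.symm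
          · have : D = 0 := by
              rw [hDdef, hc1, hc2]; simp [det2, smul_eq_mul]; ring
            linarith
        · have : det2 (v' j) w2 = 0 := h1.symm
          linarith
      · linarith [hdmin' j hj]
    have := hkey (v' j)
    have hX : dot2 (v' j) ((w2.2 - w1.2) / D, (w1.1 - w2.1) / D)
        = (det2 (v' j) w2 + det2 w1 (v' j)) / D := by
      field_simp at this ⊢
      linarith
    rw [hX]
    exact div_pos hnum hD

lemma rot2_ne_zero {u : ℝ × ℝ} (hu : u ≠ 0) : rot2 u ≠ 0 := by
  intro h
  apply hu
  have h1 : (rot2 u).1 = 0 := by rw [h]; rfl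
  have h2 : (rot2 u).2 = 0 := by rw [h]; rfl
  simp only [rot2] at h1 h2
  exact Prod.ext h2 (neg_eq_zero.mp h1)

lemma perp2 {u z : ℝ × ℝ} (hu : u ≠ 0) (h : dot2 u z = 0) : ∃ c : ℝ, z = c • rot2 u := by
  apply parallel2 (rot2_ne_zero hu)
  simp only [det2, rot2, dot2] at h ⊢
  linarith

lemma main_transfer {n : ℕ} (w w' : Fin n → ℝ × ℝ)
    (h0 : ∀ i, w i = 0 ↔ w' i = 0)
    (hdet : ∀ i j, SignType.sign (det2 (w i) (w j)) = SignType.sign (det2 (w' i) (w' j)))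
    (hdot : ∀ i j, det2 (w i) (w j) = 0 →
      SignType.sign (dot2 (w i) (w j)) = SignType.sign (dot2 (w' i) (w' j)))
    (z : ℝ × ℝ) :
    ∃ y : ℝ × ℝ, ∀ i, SignType.sign (dot2 (w' i) y) = SignType.sign (dot2 (w i) z) := by
  classical
  by_cases hex : ∃ i0, w i0 ≠ 0 ∧ dot2 (w i0) z = 0
  · obtain ⟨i0, hi0, hperp⟩ := hex
    obtain ⟨c, hc⟩ := perp2 hi0 hperp
    refine ⟨c • rot2 (w' i0), ?_⟩
    intro i
    have e1 : dot2 (w i) z = c * det2 (w i0) (w i) := by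
      rw [hc]; simp only [dot2, det2, rot2, Prod.smul_fst, Prod.smul_snd, smul_eq_mul]; ring
    have e2 : dot2 (w' i) (c • rot2 (w' i0)) = c * det2 (w' i0) (w' i) := by
      simp only [dot2, det2, rot2, Prod.smul_fst, Prod.smul_snd, smul_eq_mul]; ring
    rw [e1, e2, sign_mul, sign_mul, hdet i0 i]
  · push_neg at hex
    by_cases hall : ∀ i, w i = 0
    · refine ⟨0, ?_⟩
      intro i
      have : w' i = 0 := (h0 i).mp (hall i)
      rw [hall i, this]
      simp [dot2]
    · push_neg at hall
      set S : Finset (Fin n) := Finset.univ.filter (fun i => w i ≠ 0) with hSdef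
      have hSne : S.Nonempty := by
        obtain ⟨i, hi⟩ := hall
        exact ⟨i, by simp [hSdef, hi]⟩
      have hmemS : ∀ i, i ∈ S ↔ w i ≠ 0 := by intro i; simp [hSdef]
      set sg : Fin n → ℝ := fun i => if 0 < dot2 (w i) z then 1 else -1 with hsg
      have hsgne : ∀ i, sg i ≠ 0 := by
        intro i; simp only [hsg]; split <;> norm_num
      set vv : Fin n → ℝ × ℝ := fun i => sg i • w i with hvv
      set vv' : Fin n → ℝ × ℝ := fun i => sg i • w' i with hvv'
      have hdet_smul : ∀ (s : ℝ) (p q : ℝ × ℝ) (s' : ℝ),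
          det2 (s • p) (s' • q) = s * s' * det2 p q := by
        intro s p q s'
        simp only [det2, Prod.smul_fst, Prod.smul_snd, smul_eq_mul]; ring
      have hdot_smul : ∀ (s : ℝ) (p q : ℝ × ℝ) (s' : ℝ),
          dot2 (s • p) (s' • q) = s * s' * dot2 p q := by
        intro s p q s'
        simp only [dot2, Prod.smul_fst, Prod.smul_snd, smul_eq_mul]; ring
      have hz : ∀ i ∈ S, 0 < dot2 (vv i) z := by
        intro i hi
        have hne : dot2 (w i) z ≠ 0 := hex i ((hmemS i).mp hi)
        have : dot2 (vv i) z = sg i * dot2 (w i) z := by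
          simp only [hvv, dot2, Prod.smul_fst, Prod.smul_snd, smul_eq_mul]; ring
        rw [this, hsg]
        by_cases hp : 0 < dot2 (w i) z
        · simp [hp]
        · have hn : dot2 (w i) z < 0 := lt_of_le_of_ne (not_lt.mp hp) hne
          simp only [hp, if_false]
          nlinarith
      have hne' : ∀ i ∈ S, vv' i ≠ 0 := by
        intro i hi
        have : w' i ≠ 0 := fun h => ((hmemS i).mp hi) ((h0 i).mpr h)
        exact smul_ne_zero (hsgne i) this
      have hdetS : ∀ i ∈ S, ∀ j ∈ S,
          SignType.sign (det2 (vv i) (vv j)) = SignType.sign (det2 (vv' i) (vv' j)) := by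
        intro i _ j _
        rw [hvv, hvv', hdet_smul, hdet_smul]
        simp only [sign_mul]
        rw [hdet i j]
      have hdotS : ∀ i ∈ S, ∀ j ∈ S, det2 (vv i) (vv j) = 0 →
          SignType.sign (dot2 (vv i) (vv j)) = SignType.sign (dot2 (vv' i) (vv' j)) := by
        intro i _ j _ hd
        rw [hvv, hdet_smul] at hd
        have hd0 : det2 (w i) (w j) = 0 := by
          rcases mul_eq_zero.mp hd with h | h
          · exact absurd h (mul_ne_zero (hsgne i) (hsgne j))
          · exact h
        rw [hvv, hvv', hdot_smul, hdot_smul]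
        simp only [sign_mul]
        rw [hdot i j hd0]
      obtain ⟨y, hy⟩ := hp_lemma S hSne vv vv' z hz hne' hdetS hdotS
      refine ⟨y, ?_⟩
      intro i
      by_cases hw : w i = 0
      · rw [hw, (h0 i).mp hw]
        simp [dot2]
      · have hi : i ∈ S := (hmemS i).mpr hw
        have hpos := hy i hi
        have : dot2 (vv' i) y = sg i * dot2 (w' i) y := by
          simp only [hvv', dot2, Prod.smul_fst, Prod.smul_snd, smul_eq_mul]; ring
        rw [this] at hpos
        have hne : dot2 (w i) z ≠ 0 := hex i hw
        by_cases hp : 0 < dot2 (w i) z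
        · have hsg1 : sg i = 1 := by simp [hsg, hp]
          rw [hsg1, one_mul] at hpos
          rw [sign_pos hpos, sign_pos hp]
        · have hn : dot2 (w i) z < 0 := lt_of_le_of_ne (not_lt.mp hp) hne
          have hsg1 : sg i = -1 := by simp [hsg, hp]
          rw [hsg1] at hpos
          have : dot2 (w' i) y < 0 := by nlinarith
          rw [sign_neg this, sign_neg hn]

lemma construct_rational {n : ℕ} (w : Fin n → ℝ × ℝ) :
    ∃ w' : Fin n → ℝ × ℝ,
      (∀ i, ∃ q1 q2 : ℚ, w' i = ((q1 : ℝ), (q2 : ℝ))) ∧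
      (∀ i, w i = 0 ↔ w' i = 0) ∧
      (∀ i j, SignType.sign (det2 (w i) (w j)) = SignType.sign (det2 (w' i) (w' j))) ∧
      (∀ i j, det2 (w i) (w j) = 0 →
        SignType.sign (dot2 (w i) (w j)) = SignType.sign (dot2 (w' i) (w' j))) := by
  classical
  set τ : Fin n → ℝ := fun i => (w i).1 / (w i).2 with hτ
  set q : Fin n → ℝ := fun i =>
    ((Finset.univ.filter (fun j => (w j).2 ≠ 0 ∧ τ j < τ i)).card : ℝ) with hq
  set σ : Fin n → ℝ := fun i =>
    if 0 < (w i).2 ∨ ((w i).2 = 0 ∧ 0 < (w i).1) then 1 else -1 with hσ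
  set e : Fin n → ℝ × ℝ := fun i => if (w i).2 = 0 then ((1:ℝ), (0:ℝ)) else (q i, 1) with he
  set w' : Fin n → ℝ × ℝ := fun i => if w i = 0 then 0 else σ i • e i with hw'
  -- basic sign facts
  have hσ1 : ∀ i, σ i = 1 ∨ σ i = -1 := by
    intro i; simp only [hσ]; split <;> simp
  have hσsq : ∀ i, σ i * σ i = 1 := by
    intro i; rcases hσ1 i with h | h <;> rw [h] <;> norm_num
  have hσy : ∀ i, (w i).2 ≠ 0 → 0 < σ i * (w i).2 := by
    intro i h
    rcases lt_trichotomy ((w i).2) 0 with h' | h' | h'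
    · have hcond : ¬(0 < (w i).2 ∨ ((w i).2 = 0 ∧ 0 < (w i).1)) := by
        rintro (h'' | ⟨h'', _⟩) <;> linarith
      have : σ i = -1 := by simp only [hσ, if_neg hcond]
      rw [this]; linarith
    · exact absurd h' h
    · have : σ i = 1 := by simp only [hσ]; rw [if_pos (Or.inl h')]
      rw [this]; linarith
  have hσx : ∀ i, w i ≠ 0 → (w i).2 = 0 → 0 < σ i * (w i).1 := by
    intro i hne h
    have hx : (w i).1 ≠ 0 := by
      intro h'
      exact hne (Prod.ext h' h)
    rcases lt_trichotomy ((w i).1) 0 with h' | h' | h'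
    · have hcond : ¬(0 < (w i).2 ∨ ((w i).2 = 0 ∧ 0 < (w i).1)) := by
        rintro (h'' | ⟨_, h''⟩) <;> linarith
      have : σ i = -1 := by simp only [hσ, if_neg hcond]
      rw [this]; linarith
    · exact absurd h' hx
    · have : σ i = 1 := by simp only [hσ]; rw [if_pos (Or.inr ⟨h, h'⟩)]
      rw [this]; linarith
  -- cardinality/order lemma
  have hqlt : ∀ i j, (w i).2 ≠ 0 → (w j).2 ≠ 0 → τ i < τ j → q i < q j := by
    intro i j hi hj hlt
    simp only [hq, Nat.cast_lt]
    apply Finset.card_lt_card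
    rw [Finset.ssubset_iff_of_subset]
    · exact ⟨i, by simp [hi, hlt], by simp⟩
    · intro k hk
      simp only [Finset.mem_filter, Finset.mem_univ, true_and] at hk ⊢
      exact ⟨hk.1, lt_trans hk.2 hlt⟩
  have hqeq : ∀ i j, τ i = τ j → q i = q j := by
    intro i j hij
    simp only [hq, hij]
  have hqsgn : ∀ i j, (w i).2 ≠ 0 → (w j).2 ≠ 0 →
      SignType.sign (τ i - τ j) = SignType.sign (q i - q j) := by
    intro i j hi hj
    rcases lt_trichotomy (τ i) (τ j) with h | h | h
    · rw [sign_neg (by linarith), sign_neg (by linarith [hqlt i j hi hj h])]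
    · rw [hqeq i j h, h]; simp
    · rw [sign_pos (by linarith), sign_pos (by linarith [hqlt j i hj hi h])]
  -- core det comparison
  have hcore_det : ∀ i j, w i ≠ 0 → w j ≠ 0 →
      SignType.sign (det2 (σ i • w i) (σ j • w j)) = SignType.sign (det2 (e i) (e j)) := by
    intro i j hi hj
    by_cases hyi : (w i).2 = 0 <;> by_cases hyj : (w j).2 = 0
    · have e1 : det2 (σ i • w i) (σ j • w j) = 0 := by
        simp only [det2, Prod.smul_fst, Prod.smul_snd, smul_eq_mul, hyi, hyj]; ring
      have e2 : det2 (e i) (e j) = 0 := by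
        simp only [he, if_pos hyi, if_pos hyj, det2]; norm_num
      rw [e1, e2]
    · have e1 : det2 (σ i • w i) (σ j • w j) = (σ i * (w i).1) * (σ j * (w j).2) := by
        simp only [det2, Prod.smul_fst, Prod.smul_snd, smul_eq_mul, hyi]; ring
      have e2 : det2 (e i) (e j) = 1 := by
        simp only [he, if_pos hyi, if_neg hyj, det2]; norm_num
      rw [e1, e2, sign_pos (mul_pos (hσx i hi hyi) (hσy j hyj))]
      norm_num
    · have e1 : det2 (σ i • w i) (σ j • w j) = -((σ i * (w i).2) * (σ j * (w j).1)) := by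
        simp only [det2, Prod.smul_fst, Prod.smul_snd, smul_eq_mul, hyj]; ring
      have e2 : det2 (e i) (e j) = -1 := by
        simp only [he, if_neg hyi, if_pos hyj, det2]; norm_num
      rw [e1, e2, sign_neg (by nlinarith [mul_pos (hσy i hyi) (hσx j hj hyj)])]
      norm_num
    · have hxi : (w i).1 = τ i * (w i).2 := by
        show (w i).1 = (w i).1 / (w i).2 * (w i).2; rw [div_mul_cancel₀ _ hyi]
      have hxj : (w j).1 = τ j * (w j).2 := by
        show (w j).1 = (w j).1 / (w j).2 * (w j).2; rw [div_mul_cancel₀ _ hyj]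
      have e1 : det2 (σ i • w i) (σ j • w j)
          = ((σ i * (w i).2) * (σ j * (w j).2)) * (τ i - τ j) := by
        simp only [det2, Prod.smul_fst, Prod.smul_snd, smul_eq_mul]
        rw [hxi, hxj]; ring
      have e2 : det2 (e i) (e j) = q i - q j := by
        simp only [he, if_neg hyi, if_neg hyj, det2]; ring
      rw [e1, e2, sign_mul, sign_pos (mul_pos (hσy i hyi) (hσy j hyj)), one_mul]
      exact hqsgn i j hyi hyj
  -- core dot comparison
  have hcore_dot : ∀ i j, w i ≠ 0 → w j ≠ 0 → det2 (σ i • w i) (σ j • w j) = 0 →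
      0 < dot2 (σ i • w i) (σ j • w j) ∧ 0 < dot2 (e i) (e j) := by
    intro i j hi hj hd
    by_cases hyi : (w i).2 = 0 <;> by_cases hyj : (w j).2 = 0
    · constructor
      · have e1 : dot2 (σ i • w i) (σ j • w j) = (σ i * (w i).1) * (σ j * (w j).1) := by
          simp only [dot2, Prod.smul_fst, Prod.smul_snd, smul_eq_mul, hyi, hyj]; ring
        rw [e1]; exact mul_pos (hσx i hi hyi) (hσx j hj hyj)
      · simp only [he, if_pos hyi, if_pos hyj, dot2]; norm_num
    · exfalso
      have e1 : det2 (σ i • w i) (σ j • w j) = (σ i * (w i).1) * (σ j * (w j).2) := by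
        simp only [det2, Prod.smul_fst, Prod.smul_snd, smul_eq_mul, hyi]; ring
      rw [e1] at hd
      nlinarith [mul_pos (hσx i hi hyi) (hσy j hyj)]
    · exfalso
      have e1 : det2 (σ i • w i) (σ j • w j) = -((σ i * (w i).2) * (σ j * (w j).1)) := by
        simp only [det2, Prod.smul_fst, Prod.smul_snd, smul_eq_mul, hyj]; ring
      rw [e1] at hd
      nlinarith [mul_pos (hσy i hyi) (hσx j hj hyj)]
    · have hxi : (w i).1 = τ i * (w i).2 := by
        show (w i).1 = (w i).1 / (w i).2 * (w i).2; rw [div_mul_cancel₀ _ hyi]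
      have hxj : (w j).1 = τ j * (w j).2 := by
        show (w j).1 = (w j).1 / (w j).2 * (w j).2; rw [div_mul_cancel₀ _ hyj]
      have e1 : det2 (σ i • w i) (σ j • w j)
          = ((σ i * (w i).2) * (σ j * (w j).2)) * (τ i - τ j) := by
        simp only [det2, Prod.smul_fst, Prod.smul_snd, smul_eq_mul]
        rw [hxi, hxj]; ring
      rw [e1] at hd
      have hpos := mul_pos (hσy i hyi) (hσy j hyj)
      have hττ : τ i = τ j := by
        rcases mul_eq_zero.mp hd with h | h
        · exact absurd h (ne_of_gt hpos)
        · linarith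
      constructor
      · have e2 : dot2 (σ i • w i) (σ j • w j)
            = ((σ i * (w i).2) * (σ j * (w j).2)) * (1 + τ i * τ j) := by
          simp only [dot2, Prod.smul_fst, Prod.smul_snd, smul_eq_mul]
          rw [hxi, hxj]; ring
        rw [e2, hττ]
        nlinarith [mul_self_nonneg (τ j)]
      · have e2 : dot2 (e i) (e j) = q i * q j + 1 := by
          simp only [he, if_neg hyi, if_neg hyj, dot2]; ring
        have hqq : q i = q j := hqeq i j hττ
        rw [e2, hqq]
        have : 0 ≤ q j := by simp [hq]
        nlinarith
  refine ⟨w', ?_, ?_, ?_, ?_⟩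
  · intro i
    by_cases h : w i = 0
    · exact ⟨0, 0, by simp [hw', h]; rfl⟩
    · by_cases hy : (w i).2 = 0
      · rcases hσ1 i with hs | hs
        · exact ⟨1, 0, by simp [hw', h, he, hy, hs]⟩
        · exact ⟨-1, 0, by simp [hw', h, he, hy, hs]⟩
      · rcases hσ1 i with hs | hs
        · refine ⟨((Finset.univ.filter (fun j => (w j).2 ≠ 0 ∧ τ j < τ i)).card : ℚ), 1, ?_⟩
          simp [hw', h, he, hy, hs, hq]
        · refine ⟨-((Finset.univ.filter (fun j => (w j).2 ≠ 0 ∧ τ j < τ i)).card : ℚ), -1, ?_⟩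
          simp [hw', h, he, hy, hs, hq]
  · intro i
    constructor
    · intro h; simp [hw', h]
    · intro h
      by_contra hne
      simp only [hw'] at h
      rw [if_neg hne] at h
      have hσne : σ i ≠ 0 := by rcases hσ1 i with h' | h' <;> rw [h'] <;> norm_num
      have hene : e i ≠ 0 := by
        simp only [he]
        by_cases hy : (w i).2 = 0
        · rw [if_pos hy]
          intro hh
          have := congrArg Prod.fst hh
          norm_num at this
        · rw [if_neg hy]
          intro hh
          have := congrArg Prod.snd hh
          norm_num at this
      rcases smul_eq_zero.mp h with h' | h'
      · exact hσne h'
      · exact hene h'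
  · intro i j
    by_cases hi : w i = 0
    · have h' : w' i = 0 := by simp [hw', hi]
      rw [hi, h']
      simp [det2]
    · by_cases hj : w j = 0
      · have h' : w' j = 0 := by simp [hw', hj]
        rw [hj, h']
        simp [det2]
      · have hwd : det2 (w i) (w j) = (σ i * σ j) * det2 (σ i • w i) (σ j • w j) := by
          simp only [det2, Prod.smul_fst, Prod.smul_snd, smul_eq_mul]
          rcases hσ1 i with h | h <;> rcases hσ1 j with h' | h' <;> rw [h, h'] <;> ring
        have hwd' : det2 (w' i) (w' j) = (σ i * σ j) * det2 (e i) (e j) := by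
          simp only [hw', if_neg hi, if_neg hj, det2, Prod.smul_fst, Prod.smul_snd,
            smul_eq_mul]
          ring
        rw [hwd, hwd']
        simp only [sign_mul]
        rw [hcore_det i j hi hj]
  · intro i j hd
    by_cases hi : w i = 0
    · have h' : w' i = 0 := by simp [hw', hi]
      rw [hi, h']
      simp [dot2]
    · by_cases hj : w j = 0
      · have h' : w' j = 0 := by simp [hw', hj]
        rw [hj, h']
        simp [dot2]
      · have hd2 : det2 (σ i • w i) (σ j • w j) = 0 := by
          have : det2 (σ i • w i) (σ j • w j) = (σ i * σ j) * det2 (w i) (w j) := by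
            simp only [det2, Prod.smul_fst, Prod.smul_snd, smul_eq_mul]; ring
          rw [this, hd, mul_zero]
        obtain ⟨hp1, hp2⟩ := hcore_dot i j hi hj hd2
        have e1 : dot2 (w i) (w j) = (σ i * σ j) * dot2 (σ i • w i) (σ j • w j) := by
          simp only [dot2, Prod.smul_fst, Prod.smul_snd, smul_eq_mul]
          rcases hσ1 i with h | h <;> rcases hσ1 j with h' | h' <;> rw [h, h'] <;> ring
        have e2 : dot2 (w' i) (w' j) = (σ i * σ j) * dot2 (e i) (e j) := by
          simp only [hw', if_neg hi, if_neg hj, dot2, Prod.smul_fst, Prod.smul_snd,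
            smul_eq_mul]
          ring
        rw [e1, e2]
        simp only [sign_mul]
        rw [sign_pos hp1, sign_pos hp2]

lemma indep_of_det {n : ℕ} (u v : Fin n → ℝ)
    (h : ∃ i j, det2 (u i, v i) (u j, v j) ≠ 0) :
    ∀ s t : ℝ, s • u + t • v = 0 → s = 0 ∧ t = 0 := by
  obtain ⟨i, j, hij⟩ := h
  intro s t hst
  have hi : s * u i + t * v i = 0 := by
    have := congrFun hst i
    simpa using this
  have hj : s * u j + t * v j = 0 := by
    have := congrFun hst j
    simpa using this
  simp only [det2] at hij
  constructor
  · by_contra hs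
    apply hij
    have h1 : s * (u i * v j - v i * u j) = 0 := by linear_combination v j * hi - v i * hj
    rcases mul_eq_zero.mp h1 with h' | h'
    · exact absurd h' hs
    · exact h'
  · by_contra ht
    apply hij
    have h1 : t * (u i * v j - v i * u j) = 0 := by linear_combination u i * hj - u j * hi
    rcases mul_eq_zero.mp h1 with h' | h'
    · exact absurd h' ht
    · exact h'

lemma exists_det_ne {n : ℕ} (u v : Fin n → ℝ)
    (h : ∀ s t : ℝ, s • u + t • v = 0 → s = 0 ∧ t = 0) :
    ∃ i j, det2 (u i, v i) (u j, v j) ≠ 0 := by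
  by_contra hall
  push_neg at hall
  by_cases hz : ∀ i, (u i, v i) = (0, 0)
  · have hu : u = 0 := funext fun i => congrArg Prod.fst (hz i)
    have : (1 : ℝ) = 0 ∧ (0 : ℝ) = 0 := h 1 0 (by rw [hu]; simp)
    exact one_ne_zero this.1
  · push_neg at hz
    obtain ⟨k, hk⟩ := hz
    have hk' : ((u k, v k) : ℝ × ℝ) ≠ 0 := by
      simpa [Prod.ext_iff] using hk
    have hpar : ∀ i, ∃ c : ℝ, ((u i, v i) : ℝ × ℝ) = c • (u k, v k) := by
      intro i
      exact parallel2 hk' (by have := hall k i; simpa using this)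
    have : (- v k) • u + (u k) • v = 0 := by
      funext i
      obtain ⟨c, hc⟩ := hpar i
      have h1 : u i = c * u k := by
        have := congrArg Prod.fst hc; simpa using this
      have h2 : v i = c * v k := by
        have := congrArg Prod.snd hc; simpa using this
      simp only [Pi.add_apply, Pi.smul_apply, smul_eq_mul, Pi.zero_apply, h1, h2]
      ring
    obtain ⟨h1, h2⟩ := h _ _ this
    apply hk'
    have hv : v k = 0 := by linarith [neg_eq_zero.mp h1]
    exact Prod.ext (by simpa using h2) (by simpa using hv)

theorem stmt_2 {n : ℕ} (L : Submodule ℝ (Fin n → ℝ)) (hL : Module.finrank ℝ L = 2) :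
    ∃ K : Submodule ℝ (Fin n → ℝ), IsRationalSubspace K ∧
      Module.finrank ℝ K = 2 ∧ signSet K = signSet L := by
  classical
  let b : Module.Basis (Fin 2) ℝ L := Module.finBasisOfFinrankEq ℝ L hL
  set u : Fin n → ℝ := (b 0 : Fin n → ℝ) with hu
  set v : Fin n → ℝ := (b 1 : Fin n → ℝ) with hv
  -- L is the span of u and v
  have hrange : Set.range (fun i : Fin 2 => ((b i : L) : Fin n → ℝ)) = {u, v} := by
    ext x
    constructor
    · rintro ⟨i, rfl⟩
      fin_cases i
      · exact Or.inl rfl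
      · exact Or.inr rfl
    · rintro (rfl | rfl)
      · exact ⟨0, rfl⟩
      · exact ⟨1, rfl⟩
  have hLspan : Submodule.span ℝ {u, v} = L := by
    rw [← hrange]
    have : (fun i : Fin 2 => ((b i : L) : Fin n → ℝ)) = L.subtype ∘ b := rfl
    rw [this, Set.range_comp, Submodule.span_image, b.span_eq, Submodule.map_subtype_top]
  -- linear independence of u, v
  have hindep : ∀ s t : ℝ, s • u + t • v = 0 → s = 0 ∧ t = 0 := by
    intro s t hst
    have hsum : s • b 0 + t • b 1 = (0 : L) := by
      apply Subtype.coe_injective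
      simpa [hu, hv] using hst
    have hli := b.linearIndependent
    rw [Fintype.linearIndependent_iff] at hli
    have := hli ![s, t] (by simpa [Fin.sum_univ_two] using hsum)
    exact ⟨this 0, this 1⟩
  -- construct rational approximation
  set w : Fin n → ℝ × ℝ := fun i => (u i, v i) with hw
  obtain ⟨w', hrat, h0, hdet, hdot⟩ := construct_rational w
  set u' : Fin n → ℝ := fun i => (w' i).1 with hu'
  set v' : Fin n → ℝ := fun i => (w' i).2 with hv'
  have hw'eq : ∀ i, w' i = (u' i, v' i) := fun i => rfl
  refine ⟨Submodule.span ℝ {u', v'}, ?_, ?_, ?_⟩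
  · refine ⟨{u', v'}, ?_, rfl⟩
    rintro x (rfl | rfl)
    · intro i
      obtain ⟨q1, q2, hq⟩ := hrat i
      exact ⟨q1, by show (w' i).1 = (q1 : ℝ); rw [hq]⟩
    · intro i
      obtain ⟨q1, q2, hq⟩ := hrat i
      exact ⟨q2, by show (w' i).2 = (q2 : ℝ); rw [hq]⟩
  · -- finrank = 2
    have hdetne : ∃ i j, det2 (u' i, v' i) (u' j, v' j) ≠ 0 := by
      obtain ⟨i, j, hij⟩ := exists_det_ne u v hindep
      refine ⟨i, j, ?_⟩
      rw [← hw'eq i, ← hw'eq j]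
      intro hc
      apply hij
      have := sgn_zero_iff (hdet i j)
      exact this.mpr hc
    have hindep' := indep_of_det u' v' hdetne
    have hli : LinearIndependent ℝ ![u', v'] := LinearIndependent.pair_iff.mpr hindep'
    have hrange' : Set.range ![u', v'] = {u', v'} := by
      ext x
      constructor
      · rintro ⟨i, rfl⟩
        fin_cases i
        · exact Or.inl rfl
        · exact Or.inr rfl
      · rintro (rfl | rfl)
        · exact ⟨0, rfl⟩
        · exact ⟨1, rfl⟩
    rw [← hrange', finrank_span_eq_card hli]
    simp
  · -- signSet equality
    have hsv : ∀ (s t : ℝ) (a c : Fin n → ℝ), signVec (s • a + t • c)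
        = fun i => SignType.sign (s * a i + t * c i) := by
      intro s t a c
      funext i
      simp [signVec]
    ext p
    simp only [signSet, Set.mem_image, SetLike.mem_coe]
    constructor
    · rintro ⟨x, hx, rfl⟩
      obtain ⟨s, t, hst⟩ := Submodule.mem_span_pair.mp hx
      obtain ⟨y, hy⟩ := main_transfer w' w (fun i => (h0 i).symm)
        (fun i j => (hdet i j).symm)
        (fun i j hd => (hdot i j ((sgn_zero_iff (hdet i j)).mpr hd)).symm) (s, t)
      refine ⟨y.1 • u + y.2 • v, ?_, ?_⟩
      · rw [← hLspan]
        exact Submodule.mem_span_pair.mpr ⟨y.1, y.2, rfl⟩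
      · funext i
        have e1 : (y.1 • u + y.2 • v) i = dot2 (w i) y := by
          simp only [Pi.add_apply, Pi.smul_apply, smul_eq_mul, dot2]
          show y.1 * u i + y.2 * v i = u i * y.1 + v i * y.2
          ring
        have e2 : x i = dot2 (w' i) (s, t) := by
          rw [← hst]
          simp only [Pi.add_apply, Pi.smul_apply, smul_eq_mul, dot2]
          show s * (w' i).1 + t * (w' i).2 = (w' i).1 * s + (w' i).2 * t
          ring
        simp only [signVec, e1, e2]
        exact hy i
    · rintro ⟨x, hx, rfl⟩
      rw [← hLspan] at hx
      obtain ⟨s, t, hst⟩ := Submodule.mem_span_pair.mp hx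
      obtain ⟨y, hy⟩ := main_transfer w w' h0 hdet hdot (s, t)
      refine ⟨y.1 • u' + y.2 • v', ?_, ?_⟩
      · exact Submodule.mem_span_pair.mpr ⟨y.1, y.2, rfl⟩
      · funext i
        have e1 : (y.1 • u' + y.2 • v') i = dot2 (w' i) y := by
          simp only [Pi.add_apply, Pi.smul_apply, smul_eq_mul, dot2]
          show y.1 * (w' i).1 + y.2 * (w' i).2 = (w' i).1 * y.1 + (w' i).2 * y.2
          ring
        have e2 : x i = dot2 (w i) (s, t) := by
          rw [← hst]
          simp only [Pi.add_apply, Pi.smul_apply, smul_eq_mul, dot2]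
          show s * u i + t * v i = u i * s + v i * t
          ring
        simp only [signVec, e1, e2]
        exact hy i
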